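/- arXiv:1103.4220 — 2 statements merged into one kernel-verified Lean document; each statement's English description precedes it below -/
import Mathlib

section
/- Let N ≥ 2 and let 1 ≤ k < l ≤ N. Define for 1 ≤ i ≤ N-1 the quantities φ_{k,l}(i) = i(i-1)/[(N-1)(N-2)] if i < k; −(i-1)(N-i-1)/[(N-1)(N-2)] if k ≤ i < l; (N-i-1)(N-i)/[(N-1)(N-2)] if l ≤ i ≤ N-1; and φ'_{k,l}(i) = (1{i≥k} − i/N)·(1{i≥l} − i/N). Then |φ_{k,l}(i)| ≤ (N/(N-1))^2 · |φ'_{k,l}(i)| for all 1 ≤ i ≤ N-1. -/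
set_option maxHeartbeats 1000000 in
open Classical in
theorem stmt8 (N k l i : ℕ) (hN : 2 ≤ N) (hk : 1 ≤ k) (hkl : k < l) (hlN : l ≤ N)
    (hi : 1 ≤ i) (hiN : i ≤ N - 1) :
    |(if i < k then (i : ℝ) * ((i : ℝ) - 1) / (((N : ℝ) - 1) * ((N : ℝ) - 2))
      else if i < l then -(((i : ℝ) - 1) * ((N : ℝ) - i - 1)) / (((N : ℝ) - 1) * ((N : ℝ) - 2))
      else ((N : ℝ) - i - 1) * ((N : ℝ) - i) / (((N : ℝ) - 1) * ((N : ℝ) - 2)))|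
    ≤ ((N : ℝ) / ((N : ℝ) - 1)) ^ 2 *
      |((if k ≤ i then (1 : ℝ) else 0) - (i : ℝ) / N) *
        ((if l ≤ i then (1 : ℝ) else 0) - (i : ℝ) / N)| := by
  rcases eq_or_lt_of_le hN with hN2 | hN3
  · -- N = 2 : then k = 1, l = 2, i = 1
    have hN2' : N = 2 := hN2.symm
    subst hN2'
    interval_cases i <;> interval_cases l <;> interval_cases k <;>
      norm_num <;> positivity
  · -- N ≥ 3
    have hNR : (3 : ℝ) ≤ (N : ℝ) := by exact_mod_cast hN3
    have hiR : (1 : ℝ) ≤ (i : ℝ) := by exact_mod_cast hi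
    have hiNR : (i : ℝ) ≤ (N : ℝ) - 1 := by
      have : i ≤ N - 1 := hiN
      have := (Nat.le_sub_iff_add_le (by omega)).mp this
      have : (i : ℝ) + 1 ≤ (N : ℝ) := by exact_mod_cast this
      linarith
    have hD : (0 : ℝ) < ((N : ℝ) - 1) * ((N : ℝ) - 2) := by nlinarith
    have hNpos : (0 : ℝ) < (N : ℝ) := by linarith
    have hN1 : (0 : ℝ) < (N : ℝ) - 1 := by linarith
    have hN2' : (0 : ℝ) < (N : ℝ) - 2 := by linarith
    by_cases h1 : i < k
    · have hik : ¬ k ≤ i := by omega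
      have hil : ¬ l ≤ i := by omega
      have hil' : i < l := by omega
      simp only [if_pos h1, if_neg hik, if_neg hil]
      rw [abs_of_nonneg (div_nonneg (by nlinarith) hD.le),
        show ((0:ℝ) - i / N) * (0 - i / N) = (i/N)*(i/N) by ring,
        abs_of_nonneg (by positivity)]
      rw [div_le_iff₀ hD, div_pow]
      have key : ((i:ℝ) - 1) * ((N:ℝ) - 1) ≤ (i:ℝ) * ((N:ℝ) - 2) := by nlinarith
      have e : ((N:ℝ))^2 / ((N:ℝ)-1)^2 * ((i:ℝ)/N * (i/N)) * (((N:ℝ)-1)*((N:ℝ)-2))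
          = (i:ℝ) * ((i:ℝ) * ((N:ℝ)-2) / ((N:ℝ)-1)) := by
        field_simp
      rw [e]
      calc (i:ℝ) * ((i:ℝ) - 1) ≤ (i:ℝ) * ((i:ℝ) * ((N:ℝ)-2) / ((N:ℝ)-1)) := by
            apply mul_le_mul_of_nonneg_left _ (by linarith)
            rw [le_div_iff₀ hN1]; linarith
        _ = _ := rfl
    · push_neg at h1
      have hik : k ≤ i := h1
      by_cases h2 : i < l
      · have hil : ¬ l ≤ i := by omega
        simp only [if_neg (not_lt.mpr h1), if_pos h2, if_pos hik, if_neg hil]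
        have hlhs : -(((i:ℝ) - 1) * ((N:ℝ) - i - 1)) / (((N:ℝ) - 1) * ((N:ℝ) - 2)) ≤ 0 := by
          apply div_nonpos_of_nonpos_of_nonneg
          · nlinarith
          · linarith
        rw [abs_of_nonpos hlhs]
        have hrhs : ((1:ℝ) - i / N) * (0 - i / N) ≤ 0 := by
          apply mul_nonpos_of_nonneg_of_nonpos
          · rw [sub_nonneg, div_le_one hNpos]; linarith
          · simp only [zero_sub, neg_nonpos]; positivity
        rw [abs_of_nonpos hrhs]
        have e2 : ((N:ℝ)/((N:ℝ)-1))^2 * -(((1:ℝ) - i / N) * (0 - i / N))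
            = (i:ℝ) * ((N:ℝ) - i) / (((N:ℝ)-1)^2) := by
          field_simp; ring
        rw [e2, neg_div, neg_neg, div_le_div_iff₀ hD (by positivity)]
        nlinarith [sq_nonneg ((N:ℝ) - 2*i), sq_nonneg ((i:ℝ)-1), sq_nonneg ((N:ℝ)-i-1)]
      · push_neg at h2
        have hil : l ≤ i := h2
        simp only [if_neg (not_lt.mpr h1), if_neg (not_lt.mpr h2), if_pos hik, if_pos hil]
        rw [abs_of_nonneg (by
          apply div_nonneg _ (le_of_lt hD); nlinarith),
          show ((1:ℝ) - i / N) * (1 - i / N) = (1 - i/N)^2 by ring,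
          abs_of_nonneg (by positivity)]
        have e3 : ((N:ℝ)/((N:ℝ)-1))^2 * ((1:ℝ) - i/N)^2 = ((N:ℝ)-i)^2 / ((N:ℝ)-1)^2 := by
          field_simp
        rw [e3, div_le_div_iff₀ hD (by positivity)]
        have key : ((N:ℝ)-i-1)*((N:ℝ)-1) ≤ ((N:ℝ)-i)*((N:ℝ)-2) := by nlinarith
        have hfac : (0:ℝ) ≤ ((N:ℝ)-i)*((N:ℝ)-1) := by nlinarith
        nlinarith [mul_le_mul_of_nonneg_left key hfac]
end

section
/- Let N ≥ 3 and 1 ≤ k < l < m ≤ N. Define for 1 ≤ i ≤ N-1: θ_{k,l,m}(i) = −i(i-1)(i-2)/[(N-2)(N-3)(N-4)] if i < k; (i-1)(i-2)(N-i-2)/[(N-2)(N-3)(N-4)] if k ≤ i < l; −(i-2)(N-i-2)(N-i-1)/[(N-2)(N-3)(N-4)] if l ≤ i < m; (N-i-2)(N-i-1)(N-i)/[(N-2)(N-3)(N-4)] if m ≤ i ≤ N-1. Define θ'_{k,l,m}(i) = (1{i≥k} − i/N)(1{i≥l} − i/N)(1{i≥m} − i/N). Then |θ_{k,l,m}(i)|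 ≤ (N/(N-2))^3 · |θ'_{k,l,m}(i)| for all 1 ≤ i ≤ N-1, provided N ≥ 5 so the denominators are positive. -/
lemma prod3_le {a1 a2 a3 A1 A2 A3 : ℝ} (ha1 : 0 ≤ a1) (ha2 : 0 ≤ a2)
    (hA1 : 0 ≤ A1) (hA2 : 0 ≤ A2) (hA3 : 0 ≤ A3)
    (h1 : a1 ≤ A1) (h2 : a2 ≤ A2) (h3 : a3 ≤ A3) :
    a1 * a2 * a3 ≤ A1 * A2 * A3 := by
  rcases le_or_gt a3 0 with h | h
  · have hL : a1 * a2 * a3 ≤ 0 := mul_nonpos_of_nonneg_of_nonpos (mul_nonneg ha1 ha2) h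
    have hR : 0 ≤ A1 * A2 * A3 := by positivity
    linarith
  · exact mul_le_mul (mul_le_mul h1 h2 ha2 hA1) h3 h.le (mul_nonneg hA1 hA2)

set_option maxHeartbeats 1000000 in
open Classical in
theorem stmt10 (N k l m i : ℕ) (hN : 5 ≤ N) (hk : 1 ≤ k) (hkl : k < l) (hlm : l < m)
    (hmN : m ≤ N) (hi : 1 ≤ i) (hiN : i ≤ N - 1) :
    |(if i < k then
        -((i : ℝ) * ((i : ℝ) - 1) * ((i : ℝ) - 2)) /
          (((N : ℝ) - 2) * ((N : ℝ) - 3) * ((N : ℝ) - 4))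
      else if i < l then
        ((i : ℝ) - 1) * ((i : ℝ) - 2) * ((N : ℝ) - i - 2) /
          (((N : ℝ) - 2) * ((N : ℝ) - 3) * ((N : ℝ) - 4))
      else if i < m then
        -(((i : ℝ) - 2) * ((N : ℝ) - i - 2) * ((N : ℝ) - i - 1)) /
          (((N : ℝ) - 2) * ((N : ℝ) - 3) * ((N : ℝ) - 4))
      else
        ((N : ℝ) - i - 2) * ((N : ℝ) - i - 1) * ((N : ℝ) - i) /
          (((N : ℝ) - 2) * ((N : ℝ) - 3) * ((N : ℝ) - 4)))|
    ≤ ((N : ℝ) / ((N : ℝ) - 2)) ^ 3 *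
      |((if k ≤ i then (1 : ℝ) else 0) - (i : ℝ) / N) *
        ((if l ≤ i then (1 : ℝ) else 0) - (i : ℝ) / N) *
        ((if m ≤ i then (1 : ℝ) else 0) - (i : ℝ) / N)| := by
  have h5 : (5 : ℝ) ≤ (N : ℝ) := by exact_mod_cast hN
  have hx1 : (1 : ℝ) ≤ (i : ℝ) := by exact_mod_cast hi
  have hxle : (i : ℝ) + 1 ≤ (N : ℝ) := by exact_mod_cast (show i + 1 ≤ N by omega)
  set n : ℝ := (N : ℝ) with hn
  set x : ℝ := (i : ℝ) with hxdef
  have hD : (0 : ℝ) < (n - 2) * (n - 3) * (n - 4) :=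
    mul_pos (mul_pos (by linarith) (by linarith)) (by linarith)
  have hC : (0 : ℝ) < (n - 2) ^ 3 := pow_pos (by linarith) 3
  have hn0 : (0 : ℝ) < n := by linarith
  have hn2 : n - 2 ≠ 0 := by intro h; linarith [h5]; 
  have hn0' : n ≠ 0 := ne_of_gt hn0
  have hx0 : (0 : ℝ) ≤ x := by linarith
  by_cases h1 : i < k
  · -- case i < k : all indicators 0
    have hx3 : x + 3 ≤ n := by
      have : (i : ℝ) + 3 ≤ (N : ℝ) := by exact_mod_cast (show i + 3 ≤ N by omega)
      linarith [this]
    rw [if_pos h1, if_neg (show ¬ k ≤ i by omega), if_neg (show ¬ l ≤ i by omega),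
      if_neg (show ¬ m ≤ i by omega)]
    have hP : 0 ≤ x * (x - 1) * (x - 2) := by
      have h12 : i = 1 ∨ i = 2 ∨ 3 ≤ i := by omega
      rcases h12 with h | h | h
      · simp [hxdef, h]
      · simp [hxdef, h]
      · have hx3' : (3 : ℝ) ≤ (i : ℝ) := by exact_mod_cast h
        exact mul_nonneg (mul_nonneg (by linarith) (by linarith)) (by linarith)
    have hLeq : -(x * (x - 1) * (x - 2)) / ((n - 2) * (n - 3) * (n - 4)) =
        -((x * (x - 1) * (x - 2)) / ((n - 2) * (n - 3) * (n - 4))) := by ring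
    rw [hLeq, abs_neg, abs_of_nonneg (div_nonneg hP hD.le)]
    have hBeq : ((0 : ℝ) - x / n) * ((0 : ℝ) - x / n) * ((0 : ℝ) - x / n) =
        -((x / n) * (x / n) * (x / n)) := by ring
    rw [hBeq, abs_neg, abs_of_nonneg (by positivity)]
    have hR : (n / (n - 2)) ^ 3 * ((x / n) * (x / n) * (x / n)) =
        (x * x * x) / (n - 2) ^ 3 := by field_simp
    rw [hR, div_le_div_iff₀ hD hC]
    have key : (x * (n - 2)) * ((x - 1) * (n - 2)) * ((x - 2) * (n - 2)) ≤
        (x * (n - 2)) * (x * (n - 3)) * (x * (n - 4)) :=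
      prod3_le (mul_nonneg hx0 (by linarith)) (mul_nonneg (by linarith) (by linarith))
        (mul_nonneg hx0 (by linarith)) (mul_nonneg hx0 (by linarith))
        (mul_nonneg hx0 (by linarith))
        le_rfl (by nlinarith) (by nlinarith)
    nlinarith [key]
  · by_cases h2 : i < l
    · -- case k ≤ i < l
      have hx2 : x + 2 ≤ n := by
        have : (i : ℝ) + 2 ≤ (N : ℝ) := by exact_mod_cast (show i + 2 ≤ N by omega)
        linarith [this]
      rw [if_neg h1, if_pos h2, if_pos (show k ≤ i by omega),
        if_neg (show ¬ l ≤ i by omega), if_neg (show ¬ m ≤ i by omega)]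
      have hP : 0 ≤ (x - 1) * (x - 2) * (n - x - 2) := by
        have h12 : i = 1 ∨ 2 ≤ i := by omega
        rcases h12 with h | h
        · simp [hxdef, h]
        · have hx2' : (2 : ℝ) ≤ (i : ℝ) := by exact_mod_cast h
          exact mul_nonneg (mul_nonneg (by linarith) (by linarith)) (by linarith)
      rw [abs_of_nonneg (div_nonneg hP hD.le)]
      have hBeq : ((1 : ℝ) - x / n) * ((0 : ℝ) - x / n) * ((0 : ℝ) - x / n) =
          (1 - x / n) * ((x / n) * (x / n)) := by ring
      have hxn : x / n ≤ 1 := by rw [div_le_one hn0]; linarith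
      rw [hBeq, abs_of_nonneg (mul_nonneg (by linarith) (by positivity))]
      have hR : (n / (n - 2)) ^ 3 * ((1 - x / n) * ((x / n) * (x / n))) =
          (x * x * (n - x)) / (n - 2) ^ 3 := by field_simp
      rw [hR, div_le_div_iff₀ hD hC]
      have key : ((x - 1) * (n - 2)) * ((n - x - 2) * (n - 2)) * ((x - 2) * (n - 2)) ≤
          (x * (n - 3)) * ((n - x) * (n - 2)) * (x * (n - 4)) :=
        prod3_le (mul_nonneg (by linarith) (by linarith))
          (mul_nonneg (by linarith) (by linarith))
          (mul_nonneg hx0 (by linarith)) (mul_nonneg (by linarith) (by linarith))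
          (mul_nonneg hx0 (by linarith))
          (by nlinarith) (by nlinarith) (by nlinarith)
      nlinarith [key]
    · by_cases h3 : i < m
      · -- case l ≤ i < m
        have hx2 : (2 : ℝ) ≤ x := by
          have : (2 : ℝ) ≤ (i : ℝ) := by exact_mod_cast (show 2 ≤ i by omega)
          linarith [this]
        rw [if_neg h1, if_neg h2, if_pos h3, if_pos (show k ≤ i by omega),
          if_pos (show l ≤ i by omega), if_neg (show ¬ m ≤ i by omega)]
        rcases (show i = N - 1 ∨ i + 2 ≤ N by omega) with hsp | hsp
        · have hxN : x = n - 1 := by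
            rw [hxdef, hn, hsp]
            push_cast [Nat.cast_sub (show 1 ≤ N by omega)]
            ring
          have hnum : (x - 2) * (n - x - 2) * (n - x - 1) = 0 := by rw [hxN]; ring
          rw [hnum]
          simp only [neg_zero, zero_div, abs_zero]
          have hpow : (0 : ℝ) ≤ (n / (n - 2)) ^ 3 :=
            pow_nonneg (div_nonneg (by linarith) (by linarith)) 3
          exact mul_nonneg hpow (abs_nonneg _)
        have hx2n : x + 2 ≤ n := by
          have : (i : ℝ) + 2 ≤ (N : ℝ) := by exact_mod_cast hsp
          linarith [this]
        have hP : 0 ≤ (x - 2) * (n - x - 2) * (n - x - 1) :=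
          mul_nonneg (mul_nonneg (by linarith) (by linarith)) (by linarith)
        have hLeq : -((x - 2) * (n - x - 2) * (n - x - 1)) / ((n - 2) * (n - 3) * (n - 4)) =
            -(((x - 2) * (n - x - 2) * (n - x - 1)) / ((n - 2) * (n - 3) * (n - 4))) := by ring
        rw [hLeq, abs_neg, abs_of_nonneg (div_nonneg hP hD.le)]
        have hBeq : ((1 : ℝ) - x / n) * ((1 : ℝ) - x / n) * ((0 : ℝ) - x / n) =
            -((1 - x / n) ^ 2 * (x / n)) := by ring
        rw [hBeq, abs_neg, abs_of_nonneg (by positivity)]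
        have hR : (n / (n - 2)) ^ 3 * ((1 - x / n) ^ 2 * (x / n)) =
            (x * ((n - x) * (n - x))) / (n - 2) ^ 3 := by field_simp
        rw [hR, div_le_div_iff₀ hD hC]
        have key : ((x - 2) * (n - 2)) * ((n - x - 1) * (n - 2)) * ((n - x - 2) * (n - 2)) ≤
            (x * (n - 4)) * ((n - x) * (n - 3)) * ((n - x) * (n - 2)) :=
          prod3_le (mul_nonneg (by linarith) (by linarith))
            (mul_nonneg (by linarith) (by linarith))
            (mul_nonneg hx0 (by linarith)) (mul_nonneg (by linarith) (by linarith))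
            (mul_nonneg (by linarith) (by linarith))
            (by nlinarith) (by nlinarith) (by nlinarith)
        nlinarith [key]
      · -- case m ≤ i
        have hx3 : (3 : ℝ) ≤ x := by
          have : (3 : ℝ) ≤ (i : ℝ) := by exact_mod_cast (show 3 ≤ i by omega)
          linarith [this]
        rw [if_neg h1, if_neg h2, if_neg h3, if_pos (show k ≤ i by omega),
          if_pos (show l ≤ i by omega), if_pos (show m ≤ i by omega)]
        have hP : 0 ≤ (n - x - 2) * (n - x - 1) * (n - x) := by
          have h12 : i = N - 1 ∨ i = N - 2 ∨ i + 3 ≤ N := by omega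
          rcases h12 with h | h | h
          · have hxN : x = n - 1 := by
              rw [hxdef, hn, h]
              push_cast [Nat.cast_sub (show 1 ≤ N by omega)]
              ring
            have h0 : (n - (n - 1) - 2) * (n - (n - 1) - 1) * (n - (n - 1)) = 0 := by ring
            rw [hxN, h0]
          · have hxN : x = n - 2 := by
              rw [hxdef, hn, h]
              push_cast [Nat.cast_sub (show 2 ≤ N by omega)]
              ring
            have h0 : (n - (n - 2) - 2) * (n - (n - 2) - 1) * (n - (n - 2)) = 0 := by ring
            rw [hxN, h0]
          · have hx3n : (i : ℝ) + 3 ≤ (N : ℝ) := by exact_mod_cast h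
            exact mul_nonneg (mul_nonneg (by linarith) (by linarith)) (by linarith)
        rw [abs_of_nonneg (div_nonneg hP hD.le)]
        have hBeq : ((1 : ℝ) - x / n) * ((1 : ℝ) - x / n) * ((1 : ℝ) - x / n) =
            (1 - x / n) ^ 3 := by ring
        have hxn : x / n ≤ 1 := by rw [div_le_one hn0]; linarith
        rw [hBeq, abs_of_nonneg (pow_nonneg (by linarith : (0:ℝ) ≤ 1 - x / n) 3)]
        have hR : (n / (n - 2)) ^ 3 * (1 - x / n) ^ 3 =
            ((n - x) * (n - x) * (n - x)) / (n - 2) ^ 3 := by field_simp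
        rw [hR, div_le_div_iff₀ hD hC]
        have key : ((n - x) * (n - 2)) * ((n - x - 1) * (n - 2)) * ((n - x - 2) * (n - 2)) ≤
            ((n - x) * (n - 2)) * ((n - x) * (n - 3)) * ((n - x) * (n - 4)) :=
          prod3_le (mul_nonneg (by linarith) (by linarith))
            (mul_nonneg (by linarith) (by linarith))
            (mul_nonneg (by linarith) (by linarith))
            (mul_nonneg (by linarith) (by linarith))
            (mul_nonneg (by linarith) (by linarith))
            le_rfl (by nlinarith) (by nlinarith)
        nlinarith [key]
end
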